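/- The probability density function of log(XY) where X and Y are independent standard Exponential random variables is φ₂(x) = 2·K₀(2·e^{x/2})·e^{x}, where K₀ is the modified Bessel function of the second kind of order 0. -/

import Mathlib

open MeasureTheory ProbabilityTheory

/-- The modified Bessel function of the second kind of order `0`:
`K₀(z) = ∫₀^∞ e^{-z cosh t} dt`. -/
noncomputable def besselK0 (z : ℝ) : ℝ :=
  ∫ t in Set.Ioi (0 : ℝ), Real.exp (-z * Real.cosh t)

open Real Set
open scoped ENNReal NNReal

namespace LogProdAux

lemma lintegral_image_eq {s : Set ℝ} {f f' : ℝ → ℝ}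
    (hs : MeasurableSet s) (hf' : ∀ x ∈ s, HasDerivWithinAt f (f' x) s x)
    (hf : Set.InjOn f s) (g : ℝ → ℝ≥0∞) :
    ∫⁻ x in f '' s, g x = ∫⁻ x in s, ENNReal.ofReal (|f' x|) * g (f x) := by
  simpa only [ContinuousLinearMap.det_toSpanSingleton] using
    MeasureTheory.lintegral_image_eq_lintegral_abs_det_fderiv_mul volume hs
      (fun x hx => (hf' x hx).hasFDerivWithinAt) hf g

lemma besselK0_nonneg (z : ℝ) : 0 ≤ besselK0 z :=
  setIntegral_nonneg measurableSet_Ioi fun t _ => (Real.exp_pos _).le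

lemma integrableOn_exp_neg_mul_cosh {z : ℝ} (hz : 0 < z) :
    IntegrableOn (fun t => Real.exp (-z * Real.cosh t)) (Set.Ioi 0) := by
  have hbound : IntegrableOn (fun t => Real.exp (-(z / 2)) * Real.exp (-(z / 2) * t))
      (Set.Ioi 0) := (exp_neg_integrableOn_Ioi 0 (half_pos hz)).const_mul _
  refine hbound.mono' ?_ ?_
  · exact ((Real.continuous_exp.comp ((continuous_const.mul Real.continuous_cosh))).aestronglyMeasurable)
  · filter_upwards [ae_restrict_mem measurableSet_Ioi] with t ht
    rw [Real.norm_eq_abs, abs_of_pos (Real.exp_pos _), ← Real.exp_add]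
    apply Real.exp_le_exp.2
    have h1 : (1 + t) / 2 ≤ Real.cosh t := by
      have h2 : t + 1 ≤ Real.exp t := Real.add_one_le_exp t
      have : Real.exp t / 2 ≤ Real.cosh t := by
        rw [Real.cosh_eq]
        have := (Real.exp_pos (-t)).le
        linarith
      linarith
    have := mul_le_mul_of_nonneg_left h1 hz.le
    nlinarith

lemma lintegral_Ioi_eq (z : ℝ) (hz : 0 < z) :
    ∫⁻ t in Set.Ioi (0 : ℝ), ENNReal.ofReal (Real.exp (-z * Real.cosh t)) =
      ENNReal.ofReal (besselK0 z) := by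
  rw [besselK0, ofReal_integral_eq_lintegral_ofReal (integrableOn_exp_neg_mul_cosh hz)
    (Filter.Eventually.of_forall fun t => (Real.exp_pos _).le)]

lemma lintegral_univ_eq (z : ℝ) (hz : 0 < z) :
    ∫⁻ t : ℝ, ENNReal.ofReal (Real.exp (-z * Real.cosh t)) =
      2 * ENNReal.ofReal (besselK0 z) := by
  have h0 : ∫⁻ t in ({(0:ℝ)} : Set ℝ), ENNReal.ofReal (Real.exp (-z * Real.cosh t)) = 0 :=
    setLIntegral_measure_zero _ _ Real.volume_singleton
  have hcompl := lintegral_add_compl (μ := volume) (fun t : ℝ => ENNReal.ofReal (Real.exp (-z * Real.cosh t)))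
      (MeasurableSet.singleton (0:ℝ))
  have hsplit : ∫⁻ t in ({(0:ℝ)}ᶜ : Set ℝ), ENNReal.ofReal (Real.exp (-z * Real.cosh t)) =
      (∫⁻ t in Set.Iio (0:ℝ), ENNReal.ofReal (Real.exp (-z * Real.cosh t))) +
      ∫⁻ t in Set.Ioi (0:ℝ), ENNReal.ofReal (Real.exp (-z * Real.cosh t)) := by
    rw [← Set.Iio_union_Ioi, lintegral_union measurableSet_Ioi]
    exact (Set.Iic_disjoint_Ioi le_rfl).mono_left Set.Iio_subset_Iic_self
  have hneg : ∫⁻ t in Set.Iio (0:ℝ), ENNReal.ofReal (Real.exp (-z * Real.cosh t)) =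
      ∫⁻ t in Set.Ioi (0:ℝ), ENNReal.ofReal (Real.exp (-z * Real.cosh t)) := by
    have himg : (fun t : ℝ => -t) '' Set.Ioi 0 = Set.Iio 0 := by
      ext y; simp only [Set.mem_image, Set.mem_Ioi, Set.mem_Iio]
      constructor
      · rintro ⟨t, ht, rfl⟩; linarith
      · intro hy; exact ⟨-y, by linarith, by ring⟩
    rw [← himg, lintegral_image_eq measurableSet_Ioi
      (fun x _ => (hasDerivAt_neg x).hasDerivWithinAt)
      (fun a _ b _ h => by simpa using neg_injective h)]
    refine setLIntegral_congr_fun measurableSet_Ioi (fun t _ => ?_)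
    simp [Real.cosh_neg]
  calc ∫⁻ t : ℝ, ENNReal.ofReal (Real.exp (-z * Real.cosh t))
      = (∫⁻ t in ({(0:ℝ)} : Set ℝ), ENNReal.ofReal (Real.exp (-z * Real.cosh t))) +
        ∫⁻ t in ({(0:ℝ)}ᶜ : Set ℝ), ENNReal.ofReal (Real.exp (-z * Real.cosh t)) := hcompl.symm
    _ = 2 * ENNReal.ofReal (besselK0 z) := by
        rw [h0, zero_add, hsplit, hneg, lintegral_Ioi_eq z hz, ← two_mul]

/-- The `x`-integral: substitution `x = a eᵗ`. -/
lemma lintegral_x (a : ℝ) (ha : 0 < a) :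
    ∫⁻ x in Set.Ioi (0:ℝ), ENNReal.ofReal (Real.exp (-x)) *
        (ENNReal.ofReal (a ^ 2 / x) * ENNReal.ofReal (Real.exp (-(a ^ 2 / x)))) =
      ENNReal.ofReal (2 * besselK0 (2 * a) * a ^ 2) := by
  have himg : (fun t : ℝ => a * Real.exp t) '' Set.univ = Set.Ioi 0 := by
    ext y; simp only [Set.image_univ, Set.mem_range, Set.mem_Ioi]
    constructor
    · rintro ⟨t, rfl⟩; positivity
    · intro hy; exact ⟨Real.log (y / a), by
        rw [Real.exp_log (by positivity)]; field_simp⟩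
  have hinj : Set.InjOn (fun t : ℝ => a * Real.exp t) Set.univ := fun s _ t _ h => by
    simpa using Real.exp_injective (mul_left_cancel₀ ha.ne' h)
  have hderiv : ∀ t ∈ (Set.univ : Set ℝ),
      HasDerivWithinAt (fun t : ℝ => a * Real.exp t) (a * Real.exp t) Set.univ t :=
    fun t _ => ((Real.hasDerivAt_exp t).const_mul a).hasDerivWithinAt
  rw [← himg, lintegral_image_eq MeasurableSet.univ hderiv hinj, Measure.restrict_univ]
  have hpt : ∀ t : ℝ, ENNReal.ofReal (|a * Real.exp t|) *
      (ENNReal.ofReal (Real.exp (-(a * Real.exp t))) *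
        (ENNReal.ofReal (a ^ 2 / (a * Real.exp t)) *
          ENNReal.ofReal (Real.exp (-(a ^ 2 / (a * Real.exp t)))))) =
      ENNReal.ofReal (a ^ 2) * ENNReal.ofReal (Real.exp (-(2 * a) * Real.cosh t)) := by
    intro t
    have het := Real.exp_pos t
    have h1 : a ^ 2 / (a * Real.exp t) = a * Real.exp (-t) := by
      rw [Real.exp_neg]; field_simp
    have key : a * Real.exp t * (Real.exp (-(a * Real.exp t)) *
        (a * Real.exp (-t) * Real.exp (-(a * Real.exp (-t))))) =
        a ^ 2 * Real.exp (-(2 * a) * Real.cosh t) := by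
      have hprod : Real.exp t * Real.exp (-t) = 1 := by
        rw [← Real.exp_add]; simp
      rw [Real.cosh_eq, show -(2*a) * ((Real.exp t + Real.exp (-t))/2) =
        -(a * Real.exp t) + -(a * Real.exp (-t)) by ring, Real.exp_add]
      linear_combination (a ^ 2 * Real.exp (-(a * Real.exp t)) *
        Real.exp (-(a * Real.exp (-t)))) * hprod
    rw [h1, abs_of_pos (by positivity), ← ENNReal.ofReal_mul (by positivity),
      ← ENNReal.ofReal_mul (by positivity), ← ENNReal.ofReal_mul (by positivity),
      key, ENNReal.ofReal_mul (by positivity)]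
  simp only [hpt]
  rw [lintegral_const_mul' _ _ ENNReal.ofReal_ne_top,
    lintegral_univ_eq (2 * a) (by positivity)]
  rw [← ENNReal.ofReal_ofNat, ← ENNReal.ofReal_mul (by norm_num),
    ← ENNReal.ofReal_mul (by positivity)]
  congr 1; ring

/-- The `y`-integral for fixed `x > 0`: substitution `y = eᵘ / x`. -/
lemma lintegral_y {s : Set ℝ} (hs : MeasurableSet s) {x : ℝ} (hx : 0 < x) :
    ∫⁻ y in Set.Ioi (0:ℝ), s.indicator (fun _ => (1:ℝ≥0∞)) (Real.log (x * y)) *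
        ENNReal.ofReal (Real.exp (-y)) =
      ∫⁻ u, s.indicator (fun _ => (1:ℝ≥0∞)) u *
        (ENNReal.ofReal (Real.exp u / x) * ENNReal.ofReal (Real.exp (-(Real.exp u / x)))) := by
  have himg : (fun u : ℝ => Real.exp u / x) '' Set.univ = Set.Ioi 0 := by
    ext y; simp only [Set.image_univ, Set.mem_range, Set.mem_Ioi]
    constructor
    · rintro ⟨u, rfl⟩; positivity
    · intro hy; exact ⟨Real.log (x * y), by
        rw [Real.exp_log (by positivity)]; field_simp⟩
  have hinj : Set.InjOn (fun u : ℝ => Real.exp u / x) Set.univ := by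
    intro u _ v _ h
    simp only at h
    have h2 := congrArg (fun r => r * x) h
    simp only [div_mul_cancel₀ _ hx.ne'] at h2
    exact Real.exp_injective h2
  have hderiv : ∀ u ∈ (Set.univ : Set ℝ),
      HasDerivWithinAt (fun u : ℝ => Real.exp u / x) (Real.exp u / x) Set.univ u :=
    fun u _ => ((Real.hasDerivAt_exp u).div_const x).hasDerivWithinAt
  rw [← himg, lintegral_image_eq MeasurableSet.univ hderiv hinj, Measure.restrict_univ]
  refine lintegral_congr fun u => ?_
  have h1 : x * (Real.exp u / x) = Real.exp u := by field_simp
  rw [h1, Real.log_exp, abs_of_pos (by positivity)]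
  ring

end LogProdAux

open LogProdAux in
/-- The key distributional identity over `ℝ × ℝ`. -/
lemma map_log_mul_prod_expMeasure :
    ((expMeasure 1).prod (expMeasure 1)).map (fun p : ℝ × ℝ => Real.log (p.1 * p.2)) =
      volume.withDensity
        (fun x => ENNReal.ofReal (2 * besselK0 (2 * Real.exp (x / 2)) * Real.exp x)) := by
  classical
  set D : ℝ → ℝ≥0∞ := (Set.Ioi (0:ℝ)).indicator (fun y => ENNReal.ofReal (Real.exp (-y)))
    with hD
  have hDmeas : Measurable D :=
    (ENNReal.measurable_ofReal.comp
      (Real.continuous_exp.comp continuous_neg).measurable).indicator measurableSet_Ioi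
  have hρ : expMeasure 1 = volume.withDensity D := by
    rw [show expMeasure 1 = volume.withDensity (exponentialPDF 1) from rfl]
    apply withDensity_congr_ae
    have h0 : ∀ᵐ y : ℝ, y ≠ (0:ℝ) := by
      rw [ae_iff]
      have : {y : ℝ | ¬ y ≠ 0} = {(0:ℝ)} := by ext y; simp
      rw [this]
      exact Real.volume_singleton
    filter_upwards [h0] with y hy
    rcases lt_or_gt_of_ne hy with h | h
    · have h' : y ∉ Set.Ioi (0:ℝ) := not_lt.mpr h.le
      rw [exponentialPDF_of_neg h, hD, Set.indicator_of_notMem h']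
    · have h' : y ∈ Set.Ioi (0:ℝ) := h
      rw [exponentialPDF_of_nonneg h.le, hD, Set.indicator_of_mem h']
      norm_num
  have hg : Measurable fun p : ℝ × ℝ => Real.log (p.1 * p.2) :=
    Real.measurable_log.comp (measurable_fst.mul measurable_snd)
  refine Measure.ext fun s hs => ?_
  rw [Measure.map_apply hg hs, withDensity_apply _ hs, hρ]
  set E := (fun p : ℝ × ℝ => Real.log (p.1 * p.2)) ⁻¹' s with hE
  have hEm : MeasurableSet E := hg hs
  rw [Measure.prod_apply hEm]
  set ind : ℝ → ℝ≥0∞ := s.indicator (fun _ => (1:ℝ≥0∞)) with hind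
  have hindmeas : Measurable ind := measurable_const.indicator hs
  have hind_le : ∀ u, ind u ≠ ⊤ := by
    intro u; rw [hind]
    by_cases hu : u ∈ s <;> simp [hu]
  have hslice : ∀ x : ℝ, (volume.withDensity D) (Prod.mk x ⁻¹' E) =
      ∫⁻ y, ind (Real.log (x * y)) * D y := by
    intro x
    have hmx : MeasurableSet (Prod.mk x ⁻¹' E) := measurable_prodMk_left hEm
    rw [withDensity_apply _ hmx, ← lintegral_indicator hmx D]
    refine lintegral_congr fun y => ?_
    by_cases hy : Real.log (x * y) ∈ s
    · have hy' : y ∈ Prod.mk x ⁻¹' E := hy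
      rw [Set.indicator_of_mem hy', hind, Set.indicator_of_mem hy, one_mul]
    · have hy' : y ∉ Prod.mk x ⁻¹' E := hy
      rw [Set.indicator_of_notMem hy', hind, Set.indicator_of_notMem hy, zero_mul]
  have hslice_meas : Measurable fun x => (volume.withDensity D) (Prod.mk x ⁻¹' E) :=
    measurable_measure_prodMk_left hEm
  rw [lintegral_withDensity_eq_lintegral_mul volume hDmeas hslice_meas]
  have step1 : ∫⁻ x, (D * fun x => (volume.withDensity D) (Prod.mk x ⁻¹' E)) x =
      ∫⁻ x in Set.Ioi (0:ℝ), ENNReal.ofReal (Real.exp (-x)) *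
        ∫⁻ y in Set.Ioi (0:ℝ), ind (Real.log (x * y)) * ENNReal.ofReal (Real.exp (-y)) := by
    rw [← lintegral_indicator measurableSet_Ioi]
    refine lintegral_congr fun x => ?_
    by_cases hx : x ∈ Set.Ioi (0:ℝ)
    · rw [Set.indicator_of_mem hx, Pi.mul_apply, hslice x, hD, Set.indicator_of_mem hx]
      congr 1
      rw [← lintegral_indicator measurableSet_Ioi]
      refine lintegral_congr fun y => ?_
      by_cases hy : y ∈ Set.Ioi (0:ℝ)
      · rw [Set.indicator_of_mem hy, Set.indicator_of_mem hy]
      · rw [Set.indicator_of_notMem hy, Set.indicator_of_notMem hy, mul_zero]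
    · rw [Set.indicator_of_notMem hx, Pi.mul_apply, hD, Set.indicator_of_notMem hx, zero_mul]
  rw [step1]
  have step2 : ∫⁻ x in Set.Ioi (0:ℝ), ENNReal.ofReal (Real.exp (-x)) *
        ∫⁻ y in Set.Ioi (0:ℝ), ind (Real.log (x * y)) * ENNReal.ofReal (Real.exp (-y)) =
      ∫⁻ x in Set.Ioi (0:ℝ), ∫⁻ u, ENNReal.ofReal (Real.exp (-x)) * (ind u *
        (ENNReal.ofReal (Real.exp u / x) * ENNReal.ofReal (Real.exp (-(Real.exp u / x))))) := by
    refine setLIntegral_congr_fun measurableSet_Ioi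
      (fun x hx => ?_)
    rw [lintegral_y hs hx, ← lintegral_const_mul' _ _ ENNReal.ofReal_ne_top]
  rw [step2]
  have hswap : ∫⁻ x in Set.Ioi (0:ℝ), ∫⁻ u, ENNReal.ofReal (Real.exp (-x)) * (ind u *
        (ENNReal.ofReal (Real.exp u / x) * ENNReal.ofReal (Real.exp (-(Real.exp u / x))))) =
      ∫⁻ u, ∫⁻ x in Set.Ioi (0:ℝ), ENNReal.ofReal (Real.exp (-x)) * (ind u *
        (ENNReal.ofReal (Real.exp u / x) * ENNReal.ofReal (Real.exp (-(Real.exp u / x))))) := by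
    apply lintegral_lintegral_swap
    apply Measurable.aemeasurable
    have m1 : Measurable fun p : ℝ × ℝ => ENNReal.ofReal (Real.exp (-p.1)) :=
      ENNReal.measurable_ofReal.comp
        ((Real.continuous_exp.comp continuous_neg).measurable.comp measurable_fst)
    have m2 : Measurable fun p : ℝ × ℝ => ind p.2 := hindmeas.comp measurable_snd
    have m3 : Measurable fun p : ℝ × ℝ => Real.exp p.2 / p.1 :=
      (Real.measurable_exp.comp measurable_snd).div measurable_fst
    have m4 : Measurable fun p : ℝ × ℝ => ENNReal.ofReal (Real.exp p.2 / p.1) :=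
      ENNReal.measurable_ofReal.comp m3
    have m5 : Measurable fun p : ℝ × ℝ =>
        ENNReal.ofReal (Real.exp (-(Real.exp p.2 / p.1))) :=
      ENNReal.measurable_ofReal.comp (Real.measurable_exp.comp m3.neg)
    exact m1.mul (m2.mul (m4.mul m5))
  rw [hswap]
  have step3 : ∫⁻ u, ∫⁻ x in Set.Ioi (0:ℝ), ENNReal.ofReal (Real.exp (-x)) * (ind u *
        (ENNReal.ofReal (Real.exp u / x) * ENNReal.ofReal (Real.exp (-(Real.exp u / x))))) =
      ∫⁻ u, ind u * ENNReal.ofReal (2 * besselK0 (2 * Real.exp (u / 2)) * Real.exp u) := by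
    refine lintegral_congr fun u => ?_
    have ha : (0:ℝ) < Real.exp (u / 2) := Real.exp_pos _
    have ha2 : Real.exp (u / 2) ^ 2 = Real.exp u := by
      rw [sq, ← Real.exp_add]; ring_nf
    calc ∫⁻ x in Set.Ioi (0:ℝ), ENNReal.ofReal (Real.exp (-x)) * (ind u *
          (ENNReal.ofReal (Real.exp u / x) * ENNReal.ofReal (Real.exp (-(Real.exp u / x)))))
        = ∫⁻ x in Set.Ioi (0:ℝ), ind u * (ENNReal.ofReal (Real.exp (-x)) *
          (ENNReal.ofReal (Real.exp u / x) * ENNReal.ofReal (Real.exp (-(Real.exp u / x))))) := by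
          refine lintegral_congr fun x => ?_; ring
      _ = ind u * ∫⁻ x in Set.Ioi (0:ℝ), ENNReal.ofReal (Real.exp (-x)) *
          (ENNReal.ofReal (Real.exp u / x) * ENNReal.ofReal (Real.exp (-(Real.exp u / x)))) :=
          lintegral_const_mul' _ _ (hind_le u)
      _ = ind u * ENNReal.ofReal (2 * besselK0 (2 * Real.exp (u / 2)) * Real.exp u) := by
          rw [show Real.exp u = Real.exp (u/2) ^ 2 from ha2.symm]
          rw [lintegral_x (Real.exp (u/2)) ha]
  rw [step3]
  rw [← lintegral_indicator hs]
  refine lintegral_congr fun u => ?_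
  by_cases hu : u ∈ s
  · rw [Set.indicator_of_mem hu, hind, Set.indicator_of_mem hu, one_mul]
  · rw [Set.indicator_of_notMem hu, hind, Set.indicator_of_notMem hu, zero_mul]

theorem log_prod_two_exponentials_density {Ω : Type*} [MeasurableSpace Ω]
    (μ : Measure Ω) [IsProbabilityMeasure μ] (X Y : Ω → ℝ)
    (hX : Measurable X) (hY : Measurable Y) (hXY : IndepFun X Y μ)
    (hXlaw : μ.map X = expMeasure 1) (hYlaw : μ.map Y = expMeasure 1) :
    μ.map (fun ω => Real.log (X ω * Y ω)) =
      volume.withDensity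
        (fun x => ENNReal.ofReal (2 * besselK0 (2 * Real.exp (x / 2)) * Real.exp x)) := by
  have hmap : μ.map (fun ω => (X ω, Y ω)) = (expMeasure 1).prod (expMeasure 1) := by
    have h := (indepFun_iff_map_prod_eq_prod_map_map hX.aemeasurable hY.aemeasurable).mp hXY
    rwa [hXlaw, hYlaw] at h
  have hg : Measurable fun p : ℝ × ℝ => Real.log (p.1 * p.2) :=
    Real.measurable_log.comp (measurable_fst.mul measurable_snd)
  calc μ.map (fun ω => Real.log (X ω * Y ω))
      = (μ.map (fun ω => (X ω, Y ω))).map (fun p : ℝ × ℝ => Real.log (p.1 * p.2)) := by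
        rw [Measure.map_map hg (hX.prodMk hY)]; rfl
    _ = ((expMeasure 1).prod (expMeasure 1)).map (fun p : ℝ × ℝ => Real.log (p.1 * p.2)) := by
        rw [hmap]
    _ = _ := map_log_mul_prod_expMeasure
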